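/- Let m ≥ 2, let d ∈ V, and set ε = +1 if ϑ_0(d) = 0 and ε = −1 if ϑ_0(d) = 1. The simple graph whose vertex set is {a ∈ V : ϑ_d(a) = 1}, with distinct vertices a, b adjacent if and only if ⟨a,b⟩ = 0, is strongly regular with parameters v = 2^{2m−1} − ε·2^{m−1}, k = 2^{2m−2} − 1, λ = 2^{2m−3} − 2, μ = 2^{2m−3} + ε·2^{m−2}. (This graph is isomorphic to the polar graph NO^ε(2m,2), whose vertices are the points of PG(2m−1,2) off the quadric Q^ε(2m−1,2) of type ε, adjacent when they span a tangent line to the quadric.) -/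

import Mathlib

open Finset

/-- The symplectic bilinear form `⟨u,v⟩ = ∑_{i<m} (u_i v_{m+i} + u_{m+i} v_i)` on `(F_2)^{2m}`. -/
def symp (m : ℕ) (u v : Fin (2*m) → ZMod 2) : ZMod 2 :=
  ∑ i : Fin m, (u ⟨i.1, by omega⟩ * v ⟨m + i.1, by omega⟩ +
    u ⟨m + i.1, by omega⟩ * v ⟨i.1, by omega⟩)

/-- The quadratic form `ϑ_0(u) = ∑_{i<m} u_i u_{m+i}`. -/
def th0 (m : ℕ) (u : Fin (2*m) → ZMod 2) : ZMod 2 :=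
  ∑ i : Fin m, u ⟨i.1, by omega⟩ * u ⟨m + i.1, by omega⟩

/-- The quadratic form `ϑ_a(u) = ϑ_0(u) + ⟨a,u⟩`. -/
def th (m : ℕ) (a u : Fin (2*m) → ZMod 2) : ZMod 2 :=
  th0 m u + symp m a u

def chi (x : ZMod 2) : ℤ := 1 - 2 * x.val

lemma chi_zero : chi 0 = 1 := by decide
lemma chi_one : chi 1 = -1 := by decide
lemma chi_add (x y : ZMod 2) : chi (x + y) = chi x * chi y := by revert x y; decide

lemma chi_sum {ι : Type*} (s : Finset ι) (f : ι → ZMod 2) :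
    chi (∑ i ∈ s, f i) = ∏ i ∈ s, chi (f i) := by
  classical
  induction s using Finset.cons_induction with
  | empty => simp [chi_zero]
  | cons a s ha ih => rw [Finset.sum_cons, Finset.prod_cons, chi_add, ih]

def pairEquiv (m : ℕ) : (Fin (2*m) → ZMod 2) ≃ (Fin m → ZMod 2 × ZMod 2) where
  toFun u i := (u ⟨i.1, by omega⟩, u ⟨m + i.1, by omega⟩)
  invFun h j := if hj : j.1 < m then (h ⟨j.1, hj⟩).1 else (h ⟨j.1 - m, by omega⟩).2
  left_inv u := by
    funext j
    by_cases hj : j.1 < m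
    · simp only [hj, dif_pos]
    · simp only [hj, dif_neg, not_false_iff]
      exact congrArg u (by ext; simp; omega)
  right_inv h := by
    funext i
    have h1 : (i : ℕ) < m := i.2
    have h2 : ¬ (m + (i : ℕ) < m) := by omega
    simp only [h1, dif_pos, h2, dif_neg, not_false_iff]
    have : (⟨m + (i:ℕ) - m, by omega⟩ : Fin m) = i := by ext; simp
    rw [this]

lemma th0_pair (m : ℕ) (u : Fin (2*m) → ZMod 2) :
    th0 m u = ∑ i : Fin m, (pairEquiv m u i).1 * (pairEquiv m u i).2 := rfl

lemma gauss (m : ℕ) : ∑ u : Fin (2*m) → ZMod 2, chi (th0 m u) = 2^m := by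
  rw [← Equiv.sum_comp (pairEquiv m).symm (fun u => chi (th0 m u))]
  have key : ∀ h : Fin m → ZMod 2 × ZMod 2,
      chi (th0 m ((pairEquiv m).symm h)) = ∏ i : Fin m, chi ((h i).1 * (h i).2) := by
    intro h
    rw [th0_pair, chi_sum]
    simp
  simp only [key]
  rw [← Fintype.prod_sum (fun (_ : Fin m) (p : ZMod 2 × ZMod 2) => chi (p.1 * p.2))]
  have : (∑ p : ZMod 2 × ZMod 2, chi (p.1 * p.2)) = 2 := by decide
  simp [this]

lemma symp_comm (m : ℕ) (u v : Fin (2*m) → ZMod 2) : symp m u v = symp m v u := by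
  unfold symp; exact Finset.sum_congr rfl (fun i _ => by ring)

lemma symp_self (m : ℕ) (u : Fin (2*m) → ZMod 2) : symp m u u = 0 := by
  unfold symp
  refine Finset.sum_eq_zero (fun i _ => ?_)
  rw [mul_comm]
  exact CharTwo.add_self_eq_zero _

lemma symp_add_left (m : ℕ) (u v w : Fin (2*m) → ZMod 2) :
    symp m (u + v) w = symp m u w + symp m v w := by
  unfold symp
  rw [← Finset.sum_add_distrib]
  exact Finset.sum_congr rfl (fun i _ => by simp [Pi.add_apply]; ring)

lemma symp_add_right (m : ℕ) (u v w : Fin (2*m) → ZMod 2) :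
    symp m u (v + w) = symp m u v + symp m u w := by
  rw [symp_comm, symp_add_left, symp_comm m v u, symp_comm m w u]

lemma symp_zero_left (m : ℕ) (v : Fin (2*m) → ZMod 2) : symp m 0 v = 0 := by
  simp [symp]

lemma symp_zero_right (m : ℕ) (v : Fin (2*m) → ZMod 2) : symp m v 0 = 0 := by
  simp [symp]

lemma th0_zero (m : ℕ) : th0 m 0 = 0 := by simp [th0]

lemma th0_add (m : ℕ) (u v : Fin (2*m) → ZMod 2) :
    th0 m (u + v) = th0 m u + th0 m v + symp m u v := by
  unfold th0 symp
  rw [← Finset.sum_add_distrib, ← Finset.sum_add_distrib]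
  exact Finset.sum_congr rfl (fun i _ => by simp [Pi.add_apply]; ring)

lemma gauss_shift (m : ℕ) (w : Fin (2*m) → ZMod 2) :
    ∑ c : Fin (2*m) → ZMod 2, chi (th0 m c + symp m w c) = chi (th0 m w) * 2^m := by
  have z1 : ∀ a b s : ZMod 2, a + s = a + b + s + b := by decide
  have h1 : ∀ c : Fin (2*m) → ZMod 2, th0 m c + symp m w c = th0 m (c + w) + th0 m w := by
    intro c
    rw [th0_add, symp_comm m w c]
    exact z1 _ _ _
  simp only [h1, chi_add]
  rw [← Finset.sum_mul]
  have h2 : ∑ i : Fin (2*m) → ZMod 2, chi (th0 m (i + w))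
      = ∑ i : Fin (2*m) → ZMod 2, chi (th0 m i) :=
    Fintype.sum_equiv (Equiv.addRight w) _ _ (fun i => rfl)
  rw [h2, gauss, mul_comm]

lemma symp_single_lo (m : ℕ) (w : Fin (2*m) → ZMod 2) (i : Fin m) :
    symp m w (Pi.single (⟨m + i.1, by have := i.2; omega⟩ : Fin (2*m)) 1)
      = w ⟨i.1, by have := i.2; omega⟩ := by
  unfold symp
  rw [Finset.sum_eq_single i]
  · have h1 : ¬ ((i.1 : ℕ) = m + i.1) := by have := i.2; omega
    simp [Pi.single_apply, Fin.ext_iff, h1, show m ≠ 0 by have := i.2; omega]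
  · intro j _ hji
    have h1 : ¬ (m + j.1 = m + i.1) := fun h => hji (Fin.ext (by omega))
    have h2 : ¬ ((j.1 : ℕ) = m + i.1) := by have := j.2; omega
    simp [Pi.single_apply, Fin.ext_iff, h1, h2, show ¬ (j.1 = i.1) from fun h => hji (Fin.ext h)]
  · intro h; exact absurd (Finset.mem_univ i) h

lemma symp_single_hi (m : ℕ) (w : Fin (2*m) → ZMod 2) (i : Fin m) :
    symp m w (Pi.single (⟨i.1, by have := i.2; omega⟩ : Fin (2*m)) 1)
      = w ⟨m + i.1, by have := i.2; omega⟩ := by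
  unfold symp
  rw [Finset.sum_eq_single i]
  · have h1 : ¬ (m + (i.1 : ℕ) = i.1) := by have := i.2; omega
    simp [Pi.single_apply, Fin.ext_iff, h1, show m ≠ 0 by have := i.2; omega]
  · intro j _ hji
    have h1 : ¬ ((j.1 : ℕ) = i.1) := fun h => hji (Fin.ext (by omega))
    have h2 : ¬ (m + (j.1 : ℕ) = i.1) := by have := i.2; omega
    simp [Pi.single_apply, Fin.ext_iff, h1, h2]
  · intro h; exact absurd (Finset.mem_univ i) h

lemma exists_symp_one (m : ℕ) (w : Fin (2*m) → ZMod 2) (hw : w ≠ 0) :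
    ∃ c, symp m w c = 1 := by
  have hne : ∃ j, w j ≠ 0 := by
    by_contra h
    push_neg at h
    exact hw (funext fun j => h j)
  obtain ⟨j, hj⟩ := hne
  have hj1 : w j = 1 := by
    have : ∀ x : ZMod 2, x ≠ 0 → x = 1 := by decide
    exact this _ hj
  by_cases hjm : j.1 < m
  · refine ⟨Pi.single (⟨m + j.1, by have := j.2; omega⟩ : Fin (2*m)) 1, ?_⟩
    have := symp_single_lo m w ⟨j.1, hjm⟩
    rw [this]
    rw [show (⟨j.1, by have := j.2; omega⟩ : Fin (2*m)) = j from Fin.ext rfl, hj1]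
  · refine ⟨Pi.single (⟨j.1 - m, by have := j.2; omega⟩ : Fin (2*m)) 1, ?_⟩
    have := symp_single_hi m w ⟨j.1 - m, by have := j.2; omega⟩
    rw [this]
    rw [show (⟨m + (j.1 - m), by omega⟩ : Fin (2*m)) = j from Fin.ext (by simp; omega), hj1]

lemma linear_sum (m : ℕ) (w : Fin (2*m) → ZMod 2) (hw : w ≠ 0) :
    ∑ c : Fin (2*m) → ZMod 2, chi (symp m w c) = 0 := by
  obtain ⟨c0, hc0⟩ := exists_symp_one m w hw
  have h1 : ∑ c : Fin (2*m) → ZMod 2, chi (symp m w c)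
      = ∑ c : Fin (2*m) → ZMod 2, chi (symp m w (c + c0)) :=
    (Fintype.sum_equiv (Equiv.addRight c0)
      (fun c => chi (symp m w (c + c0))) _ (fun c => rfl)).symm
  have h2 : ∀ c : Fin (2*m) → ZMod 2, chi (symp m w (c + c0)) = - chi (symp m w c) := by
    intro c
    rw [symp_add_right, hc0, chi_add, chi_one]
    ring
  simp only [h2, Finset.sum_neg_distrib] at h1
  linarith

lemma sum_theta (m : ℕ) (d w : Fin (2*m) → ZMod 2) :
    ∑ c : Fin (2*m) → ZMod 2, chi (th m d c + 1 + symp m w c)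
      = -(chi (th0 m (d + w)) * 2^m) := by
  have h1 : ∀ c : Fin (2*m) → ZMod 2,
      th m d c + 1 + symp m w c = (th0 m c + symp m (d + w) c) + 1 := by
    intro c
    rw [th, symp_add_left]
    have : ∀ a b e : ZMod 2, a + b + 1 + e = a + (b + e) + 1 := by decide
    exact this _ _ _
  have h2 : ∀ z : ZMod 2, chi (z + 1) = - chi z := by decide
  simp only [h1, h2]
  rw [Finset.sum_neg_distrib, gauss_shift]

lemma count1 {α : Type*} [Fintype α] (P : α → ZMod 2) :
    2 * (((univ.filter fun x => P x = 0)).card : ℤ) = ∑ x, (1 + chi (P x)) := by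
  have key : ∀ z : ZMod 2, 1 + chi z = if z = 0 then 2 else 0 := by decide
  have h : ∑ x, (1 + chi (P x)) = ∑ _x ∈ univ.filter (fun x => P x = 0), (2:ℤ) := by
    rw [Finset.sum_filter]
    exact Finset.sum_congr rfl (fun x _ => key (P x))
  rw [h, Finset.sum_const]
  simp [mul_comm]

lemma count2 {α : Type*} [Fintype α] (P1 P2 : α → ZMod 2) :
    4 * (((univ.filter fun x => P1 x = 0 ∧ P2 x = 0)).card : ℤ)
      = ∑ x, (1 + chi (P1 x)) * (1 + chi (P2 x)) := by
  have key : ∀ z1 z2 : ZMod 2,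
      (1 + chi z1) * (1 + chi z2) = if z1 = 0 ∧ z2 = 0 then 4 else 0 := by decide
  have h : ∑ x, (1 + chi (P1 x)) * (1 + chi (P2 x))
      = ∑ _x ∈ univ.filter (fun x => P1 x = 0 ∧ P2 x = 0), (4:ℤ) := by
    rw [Finset.sum_filter]
    exact Finset.sum_congr rfl (fun x _ => key (P1 x) (P2 x))
  rw [h, Finset.sum_const]
  simp [mul_comm]

lemma count3 {α : Type*} [Fintype α] (P1 P2 P3 : α → ZMod 2) :
    8 * (((univ.filter fun x => P1 x = 0 ∧ P2 x = 0 ∧ P3 x = 0)).card : ℤ)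
      = ∑ x, (1 + chi (P1 x)) * (1 + chi (P2 x)) * (1 + chi (P3 x)) := by
  have key : ∀ z1 z2 z3 : ZMod 2,
      (1 + chi z1) * (1 + chi z2) * (1 + chi z3)
        = if z1 = 0 ∧ z2 = 0 ∧ z3 = 0 then 8 else 0 := by decide
  have h : ∑ x, (1 + chi (P1 x)) * (1 + chi (P2 x)) * (1 + chi (P3 x))
      = ∑ _x ∈ univ.filter (fun x => P1 x = 0 ∧ P2 x = 0 ∧ P3 x = 0), (8:ℤ) := by
    rw [Finset.sum_filter]
    exact Finset.sum_congr rfl (fun x _ => key (P1 x) (P2 x) (P3 x))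
  rw [h, Finset.sum_const]
  simp [mul_comm]

lemma card_space (m : ℕ) : ∑ _c : Fin (2*m) → ZMod 2, (1 : ℤ) = 2^(2*m) := by
  rw [Finset.sum_const, Finset.card_univ, Fintype.card_fun]
  simp

lemma sum_theta0 (m : ℕ) (d : Fin (2*m) → ZMod 2) :
    ∑ c : Fin (2*m) → ZMod 2, chi (th m d c + 1) = -(chi (th0 m d) * 2^m) := by
  have := sum_theta m d 0
  simpa [symp_zero_left] using this

lemma vertex_ne_zero (m : ℕ) (d A : Fin (2*m) → ZMod 2) (hA : th m d A = 1) : A ≠ 0 := by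
  intro h
  rw [h, th, th0_zero, symp_zero_right] at hA
  exact absurd hA (by decide)

lemma add_ne_zero_of_ne (m : ℕ) (A B : Fin (2*m) → ZMod 2) (hAB : A ≠ B) : A + B ≠ 0 := by
  intro h
  apply hAB
  funext j
  have hj := congrFun h j
  have : ∀ x y : ZMod 2, x + y = 0 → x = y := by decide
  exact this _ _ hj

lemma chi_shift (m : ℕ) (d A : Fin (2*m) → ZMod 2) (hA : th m d A = 1) :
    chi (th0 m (d + A)) = - chi (th0 m d) := by
  have h1 : th0 m A + symp m d A = 1 := hA
  rw [th0_add, add_assoc, h1]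
  have : ∀ z : ZMod 2, chi (z + 1) = - chi z := by decide
  exact this _

lemma chi_shift2 (m : ℕ) (d A B : Fin (2*m) → ZMod 2) (hA : th m d A = 1)
    (hB : th m d B = 1) :
    chi (th0 m (d + (A + B))) = chi (th0 m d) * chi (symp m A B) := by
  have h1 : th0 m A + symp m d A = 1 := hA
  have h2 : th0 m B + symp m d B = 1 := hB
  have h3 : th0 m (d + (A + B)) = th0 m d + symp m A B := by
    rw [th0_add, th0_add, symp_add_right]
    have key : ∀ q a b sab sa sb : ZMod 2, a + sa = 1 → b + sb = 1 →
        q + (a + b + sab) + (sa + sb) = q + sab := by decide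
    exact key _ _ _ _ _ _ h1 h2
  rw [h3, chi_add]

/-- The master sum for the two-condition count. -/
lemma master2 (m : ℕ) (d A : Fin (2*m) → ZMod 2) (hA : th m d A = 1) :
    4 * (((univ.filter fun c : Fin (2*m) → ZMod 2 =>
        th m d c + 1 = 0 ∧ symp m A c = 0)).card : ℤ) = 2^(2*m) := by
  rw [count2]
  have expand : ∀ c : Fin (2*m) → ZMod 2,
      (1 + chi (th m d c + 1)) * (1 + chi (symp m A c))
        = 1 + chi (symp m A c) + chi (th m d c + 1) + chi (th m d c + 1 + symp m A c) := by
    intro c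
    have : ∀ z1 z2 : ZMod 2,
        (1 + chi z1) * (1 + chi z2) = 1 + chi z2 + chi z1 + chi (z1 + z2) := by decide
    exact this _ _
  rw [Finset.sum_congr rfl (fun c _ => expand c)]
  simp only [Finset.sum_add_distrib]
  rw [card_space, linear_sum m A (vertex_ne_zero m d A hA), sum_theta0, sum_theta,
    chi_shift m d A hA]
  ring

/-- The master sum for the three-condition count. -/
lemma master3 (m : ℕ) (d A B : Fin (2*m) → ZMod 2) (hA : th m d A = 1)
    (hB : th m d B = 1) (hAB : A ≠ B) :
    8 * (((univ.filter fun c : Fin (2*m) → ZMod 2 =>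
        th m d c + 1 = 0 ∧ symp m A c = 0 ∧ symp m B c = 0)).card : ℤ)
      = 2^(2*m) + chi (th0 m d) * (1 - chi (symp m A B)) * 2^m := by
  rw [count3]
  have expand : ∀ c : Fin (2*m) → ZMod 2,
      (1 + chi (th m d c + 1)) * (1 + chi (symp m A c)) * (1 + chi (symp m B c))
        = 1 + chi (symp m A c) + chi (symp m B c) + chi (symp m (A + B) c)
          + chi (th m d c + 1) + chi (th m d c + 1 + symp m A c)
          + chi (th m d c + 1 + symp m B c) + chi (th m d c + 1 + symp m (A + B) c) := by
    intro c
    rw [symp_add_left]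
    have : ∀ z1 z2 z3 : ZMod 2,
        (1 + chi z1) * (1 + chi z2) * (1 + chi z3)
          = 1 + chi z2 + chi z3 + chi (z2 + z3) + chi z1 + chi (z1 + z2) + chi (z1 + z3)
            + chi (z1 + (z2 + z3)) := by decide
    exact this _ _ _
  rw [Finset.sum_congr rfl (fun c _ => expand c)]
  simp only [Finset.sum_add_distrib]
  rw [card_space, linear_sum m A (vertex_ne_zero m d A hA),
    linear_sum m B (vertex_ne_zero m d B hB),
    linear_sum m (A + B) (add_ne_zero_of_ne m A B hAB),
    sum_theta0, sum_theta, sum_theta, sum_theta,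
    chi_shift m d A hA, chi_shift m d B hB, chi_shift2 m d A B hA hB]
  ring

def adjEquiv (m : ℕ) (d : Fin (2*m) → ZMod 2) (a : {x : Fin (2*m) → ZMod 2 // th m d x = 1}) :
    {b : {x : Fin (2*m) → ZMod 2 // th m d x = 1} // a ≠ b ∧ symp m a.1 b.1 = 0}
      ≃ {c : Fin (2*m) → ZMod 2 // th m d c = 1 ∧ symp m a.1 c = 0 ∧ c ≠ a.1} where
  toFun b := ⟨b.1.1, b.1.2, b.2.2, fun h => b.2.1 (Subtype.ext h.symm)⟩
  invFun c := ⟨⟨c.1, c.2.1⟩, fun h => c.2.2.2 (congrArg Subtype.val h).symm, c.2.2.1⟩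
  left_inv b := rfl
  right_inv c := rfl

def adjEquiv2 (m : ℕ) (d : Fin (2*m) → ZMod 2)
    (a b : {x : Fin (2*m) → ZMod 2 // th m d x = 1}) :
    {c : {x : Fin (2*m) → ZMod 2 // th m d x = 1} //
        (a ≠ c ∧ symp m a.1 c.1 = 0) ∧ (b ≠ c ∧ symp m b.1 c.1 = 0)}
      ≃ {c : Fin (2*m) → ZMod 2 //
          th m d c = 1 ∧ symp m a.1 c = 0 ∧ symp m b.1 c = 0 ∧ c ≠ a.1 ∧ c ≠ b.1} where
  toFun c := ⟨c.1.1, c.1.2, c.2.1.2, c.2.2.2,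
    fun h => c.2.1.1 (Subtype.ext h.symm), fun h => c.2.2.1 (Subtype.ext h.symm)⟩
  invFun c := ⟨⟨c.1, c.2.1⟩,
    ⟨fun h => c.2.2.2.2.1 (congrArg Subtype.val h).symm, c.2.2.1⟩,
    ⟨fun h => c.2.2.2.2.2 (congrArg Subtype.val h).symm, c.2.2.2.1⟩⟩
  left_inv c := rfl
  right_inv c := rfl

lemma nat_card_adj (m : ℕ) (d : Fin (2*m) → ZMod 2)
    (a : {x : Fin (2*m) → ZMod 2 // th m d x = 1}) :
    Nat.card {b : {x : Fin (2*m) → ZMod 2 // th m d x = 1} // a ≠ b ∧ symp m a.1 b.1 = 0}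
      = ((univ.filter fun c : Fin (2*m) → ZMod 2 =>
          th m d c = 1 ∧ symp m a.1 c = 0 ∧ c ≠ a.1)).card := by
  rw [Nat.card_congr (adjEquiv m d a), Nat.card_eq_fintype_card, Fintype.card_subtype]

lemma nat_card_adj2 (m : ℕ) (d : Fin (2*m) → ZMod 2)
    (a b : {x : Fin (2*m) → ZMod 2 // th m d x = 1}) :
    Nat.card {c : {x : Fin (2*m) → ZMod 2 // th m d x = 1} //
        (a ≠ c ∧ symp m a.1 c.1 = 0) ∧ (b ≠ c ∧ symp m b.1 c.1 = 0)}
      = ((univ.filter fun c : Fin (2*m) → ZMod 2 =>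
          th m d c = 1 ∧ symp m a.1 c = 0 ∧ symp m b.1 c = 0 ∧ c ≠ a.1 ∧ c ≠ b.1)).card := by
  rw [Nat.card_congr (adjEquiv2 m d a b), Nat.card_eq_fintype_card, Fintype.card_subtype]

lemma nat_card_vertices (m : ℕ) (d : Fin (2*m) → ZMod 2) :
    Nat.card {x : Fin (2*m) → ZMod 2 // th m d x = 1}
      = ((univ.filter fun c : Fin (2*m) → ZMod 2 => th m d c = 1)).card := by
  rw [Nat.card_eq_fintype_card, Fintype.card_subtype]

lemma eps_eq_chi (d0 : ZMod 2) : (if d0 = 0 then (1:ℤ) else -1) = chi d0 := by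
  revert d0; decide

lemma z_iff : ∀ z : ZMod 2, z = 1 ↔ z + 1 = 0 := by decide

lemma pow_split (a b c : ℕ) (h : a = b + c) : (2:ℤ)^a = 2^b * 2^c := by rw [h, pow_add]

lemma part_v (m : ℕ) (hm : 2 ≤ m) (d : Fin (2*m) → ZMod 2) :
    (Nat.card {a : Fin (2*m) → ZMod 2 // th m d a = 1} : ℤ)
      = 2^(2*m-1) - (if th0 m d = 0 then (1:ℤ) else -1) * 2^(m-1) := by
  rw [nat_card_vertices, eps_eq_chi]
  have hfilter : ((univ.filter fun c : Fin (2*m) → ZMod 2 => th m d c = 1))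
      = ((univ.filter fun c : Fin (2*m) → ZMod 2 => th m d c + 1 = 0)) := by
    apply Finset.filter_congr
    intro x _
    exact z_iff _
  rw [hfilter]
  have h1 : 2 * (((univ.filter fun c : Fin (2*m) → ZMod 2 => th m d c + 1 = 0)).card : ℤ)
      = ∑ c : Fin (2*m) → ZMod 2, (1 + chi (th m d c + 1)) := count1 _
  rw [Finset.sum_add_distrib, card_space, sum_theta0] at h1
  have p1 : (2:ℤ)^(2*m) = 2 * 2^(2*m-1) := by
    rw [pow_split (2*m) 1 (2*m-1) (by omega)]
    norm_num
  have hq : chi (th0 m d) * 2^m = 2 * (chi (th0 m d) * 2^(m-1)) := by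
    rw [pow_split m 1 (m-1) (by omega)]
    ring
  linarith

lemma part_k (m : ℕ) (hm : 2 ≤ m) (d : Fin (2*m) → ZMod 2)
    (a : {x : Fin (2*m) → ZMod 2 // th m d x = 1}) :
    (Nat.card {b : {x : Fin (2*m) → ZMod 2 // th m d x = 1} //
        a ≠ b ∧ symp m a.1 b.1 = 0} : ℤ) = 2^(2*m-2) - 1 := by
  rw [nat_card_adj]
  set M := ((univ.filter fun c : Fin (2*m) → ZMod 2 =>
    th m d c + 1 = 0 ∧ symp m a.1 c = 0)) with hM
  have hMA : a.1 ∈ M := by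
    rw [hM, Finset.mem_filter]
    exact ⟨Finset.mem_univ _, (z_iff _).mp a.2, symp_self m a.1⟩
  have hK : ((univ.filter fun c : Fin (2*m) → ZMod 2 =>
      th m d c = 1 ∧ symp m a.1 c = 0 ∧ c ≠ a.1)) = M.erase a.1 := by
    ext c
    simp only [hM, Finset.mem_erase, Finset.mem_filter, Finset.mem_univ, true_and, z_iff]
    tauto
  rw [hK, Finset.card_erase_of_mem hMA]
  have h4 : 4 * (M.card : ℤ) = 2^(2*m) := master2 m d a.1 a.2
  have hMpos : 1 ≤ M.card := Finset.card_pos.mpr ⟨a.1, hMA⟩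
  have p4 : (2:ℤ)^(2*m) = 4 * 2^(2*m-2) := by
    rw [pow_split (2*m) 2 (2*m-2) (by omega)]
    norm_num
  have hcast : ((M.card - 1 : ℕ) : ℤ) = (M.card : ℤ) - 1 := by omega
  rw [hcast]
  linarith

lemma part_l (m : ℕ) (hm : 2 ≤ m) (d : Fin (2*m) → ZMod 2)
    (a b : {x : Fin (2*m) → ZMod 2 // th m d x = 1})
    (hadj : a ≠ b ∧ symp m a.1 b.1 = 0) :
    (Nat.card {c : {x : Fin (2*m) → ZMod 2 // th m d x = 1} //
        (a ≠ c ∧ symp m a.1 c.1 = 0) ∧ (b ≠ c ∧ symp m b.1 c.1 = 0)} : ℤ)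
      = 2^(2*m-3) - 2 := by
  rw [nat_card_adj2]
  have hAB : a.1 ≠ b.1 := fun h => hadj.1 (Subtype.ext h)
  have hs : symp m a.1 b.1 = 0 := hadj.2
  set M := ((univ.filter fun c : Fin (2*m) → ZMod 2 =>
    th m d c + 1 = 0 ∧ symp m a.1 c = 0 ∧ symp m b.1 c = 0)) with hM
  have hMA : a.1 ∈ M := by
    rw [hM, Finset.mem_filter]
    refine ⟨Finset.mem_univ _, (z_iff _).mp a.2, symp_self m a.1, ?_⟩
    rw [symp_comm]
    exact hs
  have hMB : b.1 ∈ M := by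
    rw [hM, Finset.mem_filter]
    exact ⟨Finset.mem_univ _, (z_iff _).mp b.2, hs, symp_self m b.1⟩
  have hL : ((univ.filter fun c : Fin (2*m) → ZMod 2 =>
      th m d c = 1 ∧ symp m a.1 c = 0 ∧ symp m b.1 c = 0 ∧ c ≠ a.1 ∧ c ≠ b.1))
        = (M.erase a.1).erase b.1 := by
    ext c
    simp only [hM, Finset.mem_erase, Finset.mem_filter, Finset.mem_univ, true_and, z_iff]
    tauto
  have hBinMA : b.1 ∈ M.erase a.1 := Finset.mem_erase.mpr ⟨fun h => hAB h.symm, hMB⟩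
  rw [hL, Finset.card_erase_of_mem hBinMA, Finset.card_erase_of_mem hMA]
  have h8 : 8 * (M.card : ℤ)
      = 2^(2*m) + chi (th0 m d) * (1 - chi (symp m a.1 b.1)) * 2^m :=
    master3 m d a.1 b.1 a.2 b.2 hAB
  rw [hs, chi_zero] at h8
  have hMle : 2 ≤ M.card := by
    have hsub : ({a.1, b.1} : Finset (Fin (2*m) → ZMod 2)) ⊆ M := by
      intro x hx
      rcases Finset.mem_insert.mp hx with h | h
      · rw [h]; exact hMA
      · rw [Finset.mem_singleton.mp h]; exact hMB
    have := Finset.card_le_card hsub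
    rwa [Finset.card_pair hAB] at this
  have p3 : (2:ℤ)^(2*m) = 8 * 2^(2*m-3) := by
    rw [pow_split (2*m) 3 (2*m-3) (by omega)]
    norm_num
  have hcast : ((M.card - 1 - 1 : ℕ) : ℤ) = (M.card : ℤ) - 2 := by omega
  rw [hcast]
  linarith

lemma part_m (m : ℕ) (hm : 2 ≤ m) (d : Fin (2*m) → ZMod 2)
    (a b : {x : Fin (2*m) → ZMod 2 // th m d x = 1}) (hne : a ≠ b)
    (hnadj : ¬(a ≠ b ∧ symp m a.1 b.1 = 0)) :
    (Nat.card {c : {x : Fin (2*m) → ZMod 2 // th m d x = 1} //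
        (a ≠ c ∧ symp m a.1 c.1 = 0) ∧ (b ≠ c ∧ symp m b.1 c.1 = 0)} : ℤ)
      = 2^(2*m-3) + (if th0 m d = 0 then (1:ℤ) else -1) * 2^(m-2) := by
  rw [nat_card_adj2, eps_eq_chi]
  have hAB : a.1 ≠ b.1 := fun h => hne (Subtype.ext h)
  have hs : symp m a.1 b.1 = 1 := by
    have h0 : ¬ symp m a.1 b.1 = 0 := fun h => hnadj ⟨hne, h⟩
    have : ∀ z : ZMod 2, z ≠ 0 → z = 1 := by decide
    exact this _ h0
  set M := ((univ.filter fun c : Fin (2*m) → ZMod 2 =>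
    th m d c + 1 = 0 ∧ symp m a.1 c = 0 ∧ symp m b.1 c = 0)) with hM
  have hL : ((univ.filter fun c : Fin (2*m) → ZMod 2 =>
      th m d c = 1 ∧ symp m a.1 c = 0 ∧ symp m b.1 c = 0 ∧ c ≠ a.1 ∧ c ≠ b.1)) = M := by
    ext c
    simp only [hM, Finset.mem_filter, Finset.mem_univ, true_and, z_iff]
    constructor
    · rintro ⟨h1, h2, h3, _, _⟩
      exact ⟨h1, h2, h3⟩
    · rintro ⟨h1, h2, h3⟩
      refine ⟨h1, h2, h3, ?_, ?_⟩
      · rintro rfl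
        rw [symp_comm] at h3
        rw [h3] at hs
        exact absurd hs (by decide)
      · rintro rfl
        rw [h2] at hs
        exact absurd hs (by decide)
  rw [hL]
  have h8 : 8 * (M.card : ℤ)
      = 2^(2*m) + chi (th0 m d) * (1 - chi (symp m a.1 b.1)) * 2^m :=
    master3 m d a.1 b.1 a.2 b.2 hAB
  rw [hs, chi_one] at h8
  have p3 : (2:ℤ)^(2*m) = 8 * 2^(2*m-3) := by
    rw [pow_split (2*m) 3 (2*m-3) (by omega)]
    norm_num
  have hq : chi (th0 m d) * 2^m = 4 * (chi (th0 m d) * 2^(m-2)) := by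
    rw [pow_split m 2 (m-2) (by omega)]
    ring
  linarith

/-- The graph `NO^ε(2m,2)`: vertices `{a : ϑ_d(a) = 1}`, distinct `a, b` adjacent iff
`⟨a,b⟩ = 0`, is strongly regular with parameters
`(2^{2m-1} - ε 2^{m-1}, 2^{2m-2} - 1, 2^{2m-3} - 2, 2^{2m-3} + ε 2^{m-2})`. -/
theorem stmt_5 (m : ℕ) (hm : 2 ≤ m) (d : Fin (2*m) → ZMod 2) :
    let ε : ℤ := if th0 m d = 0 then 1 else -1
    let X := {a : Fin (2*m) → ZMod 2 // th m d a = 1}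
    let Adj : X → X → Prop := fun a b => a ≠ b ∧ symp m a.1 b.1 = 0
    -- v
    (Nat.card X : ℤ) = 2^(2*m - 1) - ε * 2^(m - 1)
    -- k
    ∧ (∀ a : X, (Nat.card {b : X // Adj a b} : ℤ) = 2^(2*m - 2) - 1)
    -- λ
    ∧ (∀ a b : X, Adj a b →
        (Nat.card {c : X // Adj a c ∧ Adj b c} : ℤ) = 2^(2*m - 3) - 2)
    -- μ
    ∧ (∀ a b : X, a ≠ b → ¬ Adj a b →
        (Nat.card {c : X // Adj a c ∧ Adj b c} : ℤ) = 2^(2*m - 3) + ε * 2^(m - 2)) := by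
  exact ⟨part_v m hm d, fun a => part_k m hm d a,
    fun a b h => part_l m hm d a b h, fun a b h1 h2 => part_m m hm d a b h1 h2⟩
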